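/- Let d ≥ 1, κ, W ≥ 1, ρ ∈ (0,1), and t ≥ 1. Let F̃, G, K ∈ ℝ^{d×d} satisfy ‖F̃^j‖₂ ≤ κ² ρ^j for all j ≥ 0, ‖G‖₂ ≤ κ, and ‖K‖₂ ≤ κ. Let s_0 ∈ ℝ^d and w_j ∈ ℝ^d (j ≥ −1, with w_{−1} = s_0) satisfy ‖w_j‖₂ ≤ W, and let M_k^{[s]} ∈ ℝ^{d×d} satisfy ‖M_k^{[s]}‖₂ ≤ κ⁴ ρ^s for all k, s. Define s_t = F̃^t s_0 + Σ_{k=0}^{t−1} Σ_{s=1}^{k+1} F̃^{t−k−1} G M_k^{[s]} w_{k−s} + w_{t−1} and u_t = −K s_t + Σ_{s=1}^{t+1} M_t^{[s]} w_{t−s}. Then there is an absolute constant C > 0 such that ‖s_t‖₂ ≤ C · W κ⁷ (1−ρ)^{−2} and ‖u_t‖₂ ≤ C · W κ⁸ (1−ρ)^{−2}. -/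

import Mathlib

/-- Spectral norm (ℓ²-operator norm) of a real square matrix. -/
noncomputable def spec13 {d : ℕ} (M : Matrix (Fin d) (Fin d) ℝ) : ℝ :=
  ‖Matrix.toEuclideanCLM (𝕜 := ℝ) M‖

/-- A square matrix acting on Euclidean space. -/
noncomputable def mv13 {d : ℕ} (M : Matrix (Fin d) (Fin d) ℝ) (v : EuclideanSpace ℝ (Fin d)) :
    EuclideanSpace ℝ (Fin d) :=
  Matrix.toEuclideanCLM (𝕜 := ℝ) M v

lemma spec13_nonneg {d : ℕ} (M : Matrix (Fin d) (Fin d) ℝ) : 0 ≤ spec13 M :=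
  norm_nonneg _

lemma mv13_le {d : ℕ} (M : Matrix (Fin d) (Fin d) ℝ) (v : EuclideanSpace ℝ (Fin d)) :
    ‖mv13 M v‖ ≤ spec13 M * ‖v‖ :=
  (Matrix.toEuclideanCLM (𝕜 := ℝ) M).le_opNorm v

lemma spec13_mul {d : ℕ} (A B : Matrix (Fin d) (Fin d) ℝ) :
    spec13 (A * B) ≤ spec13 A * spec13 B := by
  unfold spec13
  rw [map_mul]
  exact norm_mul_le _ _

lemma geo13 {ρ : ℝ} (h0 : 0 ≤ ρ) (h1 : ρ < 1) (n : ℕ) :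
    ∑ i ∈ Finset.range n, ρ ^ i ≤ (1 - ρ)⁻¹ := by
  have h2 : (0:ℝ) < 1 - ρ := by linarith
  rw [geom_sum_eq h1.ne]
  have : (ρ ^ n - 1) / (ρ - 1) = (1 - ρ ^ n) / (1 - ρ) := by
    rw [← neg_div_neg_eq]; ring_nf
  rw [this, inv_eq_one_div]
  gcongr
  have := pow_nonneg h0 n; linarith

lemma geoIcc13 {ρ : ℝ} (h0 : 0 ≤ ρ) (h1 : ρ < 1) (n : ℕ) :
    ∑ i ∈ Finset.Icc 1 n, ρ ^ i ≤ (1 - ρ)⁻¹ := by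
  have hsub : Finset.Icc 1 n ⊆ Finset.range (n + 1) := by
    intro x hx
    simp only [Finset.mem_Icc] at hx
    simp only [Finset.mem_range]
    omega
  calc ∑ i ∈ Finset.Icc 1 n, ρ ^ i
      ≤ ∑ i ∈ Finset.range (n + 1), ρ ^ i :=
        Finset.sum_le_sum_of_subset_of_nonneg hsub (fun i _ _ => pow_nonneg h0 i)
    _ ≤ (1 - ρ)⁻¹ := geo13 h0 h1 (n + 1)

/-- bounds on the state and control of the online linear control problem.
Here `w j` encodes the disturbance `w_{j−1}` (so `w 0 = w_{−1} = s_0`).  If `‖F̃ʲ‖₂ ≤ κ²ρʲ`,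
`‖G‖₂, ‖K‖₂ ≤ κ`, all disturbances have norm at most `W`, and the DAC parameters satisfy
`‖M_k^{[s]}‖₂ ≤ κ⁴ρˢ`, then the state
`s_t = F̃ᵗ s₀ + ∑_{k<t} ∑_{s=1}^{k+1} F̃^{t−k−1} G M_k^{[s]} w_{k−s} + w_{t−1}` and control
`u_t = −K s_t + ∑_{s=1}^{t+1} M_t^{[s]} w_{t−s}` satisfy `‖s_t‖₂ ≤ C W κ⁷ (1−ρ)^{−2}` and
`‖u_t‖₂ ≤ C W κ⁸ (1−ρ)^{−2}` for an absolute constant `C > 0`. -/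
theorem stmt_13 : ∃ C > (0:ℝ),
    ∀ (d t : ℕ) (κ W ρ : ℝ), 1 ≤ d → 1 ≤ t → 1 ≤ κ → 1 ≤ W → ρ ∈ Set.Ioo (0:ℝ) 1 →
    ∀ (Ftil G K : Matrix (Fin d) (Fin d) ℝ),
      (∀ j : ℕ, spec13 (Ftil ^ j) ≤ κ ^ 2 * ρ ^ j) → spec13 G ≤ κ → spec13 K ≤ κ →
    ∀ w : ℕ → EuclideanSpace ℝ (Fin d), (∀ j, ‖w j‖ ≤ W) →
    ∀ M : ℕ → ℕ → Matrix (Fin d) (Fin d) ℝ,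
      (∀ k s : ℕ, 1 ≤ s → spec13 (M k s) ≤ κ ^ 4 * ρ ^ s) →
    ∀ st ut : EuclideanSpace ℝ (Fin d),
      st = mv13 (Ftil ^ t) (w 0)
          + (∑ k ∈ Finset.range t, ∑ s ∈ Finset.Icc 1 (k + 1),
              mv13 (Ftil ^ (t - k - 1) * (G * M k s)) (w (k + 1 - s)))
          + w t →
      ut = -(mv13 K st) + ∑ s ∈ Finset.Icc 1 (t + 1), mv13 (M t s) (w (t + 1 - s)) →
      ‖st‖ ≤ C * W * κ ^ 7 * ((1 - ρ)⁻¹) ^ 2 ∧ ‖ut‖ ≤ C * W * κ ^ 8 * ((1 - ρ)⁻¹) ^ 2 := by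
  refine ⟨4, by norm_num, ?_⟩
  intro d t κ W ρ _hd _ht hκ hW hρ Ftil G K hF hG hK w hw M hM st ut hst hut
  obtain ⟨hρ0, hρ1⟩ := hρ
  have hρ0' : (0:ℝ) ≤ ρ := hρ0.le
  have hsub : (0:ℝ) < 1 - ρ := by linarith
  set r : ℝ := (1 - ρ)⁻¹ with hrdef
  have hr0 : 0 < r := inv_pos.mpr hsub
  have hr1 : 1 ≤ r := by
    rw [hrdef, le_inv_comm₀ one_pos hsub]
    linarith
  have hκ0 : (0:ℝ) < κ := by linarith
  have hW0 : (0:ℝ) < W := by linarith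
  have hκpow : ∀ m n : ℕ, m ≤ n → κ ^ m ≤ κ ^ n := fun m n h => pow_le_pow_right₀ hκ h
  -- bound on the middle double sum of st
  have h2 : ‖∑ k ∈ Finset.range t, ∑ s ∈ Finset.Icc 1 (k + 1),
      mv13 (Ftil ^ (t - k - 1) * (G * M k s)) (w (k + 1 - s))‖
      ≤ κ ^ 7 * W * r * r := by
    calc ‖∑ k ∈ Finset.range t, ∑ s ∈ Finset.Icc 1 (k + 1),
          mv13 (Ftil ^ (t - k - 1) * (G * M k s)) (w (k + 1 - s))‖
        ≤ ∑ k ∈ Finset.range t, ‖∑ s ∈ Finset.Icc 1 (k + 1),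
            mv13 (Ftil ^ (t - k - 1) * (G * M k s)) (w (k + 1 - s))‖ :=
          norm_sum_le _ _
      _ ≤ ∑ k ∈ Finset.range t, ∑ s ∈ Finset.Icc 1 (k + 1),
            ‖mv13 (Ftil ^ (t - k - 1) * (G * M k s)) (w (k + 1 - s))‖ :=
          Finset.sum_le_sum fun k _ => norm_sum_le _ _
      _ ≤ ∑ k ∈ Finset.range t, ∑ s ∈ Finset.Icc 1 (k + 1),
            (κ ^ 2 * ρ ^ (t - k - 1)) * (κ * (κ ^ 4 * ρ ^ s)) * W := by
          refine Finset.sum_le_sum fun k _ => Finset.sum_le_sum fun s hs => ?_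
          simp only [Finset.mem_Icc] at hs
          have hspec : spec13 (Ftil ^ (t - k - 1) * (G * M k s))
              ≤ (κ ^ 2 * ρ ^ (t - k - 1)) * (κ * (κ ^ 4 * ρ ^ s)) := by
            calc spec13 (Ftil ^ (t - k - 1) * (G * M k s))
                ≤ spec13 (Ftil ^ (t - k - 1)) * spec13 (G * M k s) := spec13_mul _ _
              _ ≤ spec13 (Ftil ^ (t - k - 1)) * (spec13 G * spec13 (M k s)) := by
                  have := spec13_mul G (M k s)
                  exact mul_le_mul_of_nonneg_left this (spec13_nonneg _)
              _ ≤ (κ ^ 2 * ρ ^ (t - k - 1)) * (κ * (κ ^ 4 * ρ ^ s)) := by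
                  have h1 := hF (t - k - 1)
                  have h2' := hM k s hs.1
                  have hGn := spec13_nonneg G
                  have hMn := spec13_nonneg (M k s)
                  have hFn := spec13_nonneg (Ftil ^ (t - k - 1))
                  have hx : spec13 G * spec13 (M k s) ≤ κ * (κ ^ 4 * ρ ^ s) :=
                    mul_le_mul hG h2' hMn hκ0.le
                  exact mul_le_mul h1 hx (mul_nonneg hGn hMn) (by positivity)
          calc ‖mv13 (Ftil ^ (t - k - 1) * (G * M k s)) (w (k + 1 - s))‖
              ≤ spec13 (Ftil ^ (t - k - 1) * (G * M k s)) * ‖w (k + 1 - s)‖ := mv13_le _ _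
            _ ≤ (κ ^ 2 * ρ ^ (t - k - 1)) * (κ * (κ ^ 4 * ρ ^ s)) * W := by
                apply mul_le_mul hspec (hw _) (norm_nonneg _)
                positivity
      _ = ∑ k ∈ Finset.range t, (κ ^ 7 * W * ρ ^ (t - k - 1)) *
            ∑ s ∈ Finset.Icc 1 (k + 1), ρ ^ s := by
          refine Finset.sum_congr rfl fun k _ => ?_
          rw [Finset.mul_sum]
          refine Finset.sum_congr rfl fun s _ => ?_
          ring
      _ ≤ ∑ k ∈ Finset.range t, (κ ^ 7 * W * ρ ^ (t - k - 1)) * r := by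
          refine Finset.sum_le_sum fun k _ => ?_
          exact mul_le_mul_of_nonneg_left (geoIcc13 hρ0' hρ1 (k + 1)) (by positivity)
      _ = (κ ^ 7 * W * r) * ∑ k ∈ Finset.range t, ρ ^ (t - 1 - k) := by
          rw [Finset.mul_sum]
          refine Finset.sum_congr rfl fun k _ => ?_
          rw [Nat.sub_right_comm]
          ring
      _ = (κ ^ 7 * W * r) * ∑ k ∈ Finset.range t, ρ ^ k := by
          rw [Finset.sum_range_reflect (fun k => ρ ^ k) t]
      _ ≤ (κ ^ 7 * W * r) * r :=
          mul_le_mul_of_nonneg_left (geo13 hρ0' hρ1 t) (by positivity)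
      _ = κ ^ 7 * W * r * r := rfl
  -- bound on st
  have hA : κ ^ 2 * W ≤ κ ^ 7 * W * r * r := by
    have : κ ^ 2 * W ≤ κ ^ 7 * W := by
      exact mul_le_mul_of_nonneg_right (hκpow 2 7 (by norm_num)) hW0.le
    calc κ ^ 2 * W ≤ κ ^ 7 * W := this
      _ = κ ^ 7 * W * 1 * 1 := by ring
      _ ≤ κ ^ 7 * W * r * r := by
          apply mul_le_mul (mul_le_mul_of_nonneg_left hr1 (by positivity)) hr1 one_pos.le
          positivity
  have hs3 : ‖st‖ ≤ 3 * (κ ^ 7 * W * r * r) := by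
    rw [hst]
    have t1 : ‖mv13 (Ftil ^ t) (w 0)‖ ≤ κ ^ 7 * W * r * r := by
      calc ‖mv13 (Ftil ^ t) (w 0)‖ ≤ spec13 (Ftil ^ t) * ‖w 0‖ := mv13_le _ _
        _ ≤ (κ ^ 2 * ρ ^ t) * W := by
            apply mul_le_mul (hF t) (hw 0) (norm_nonneg _) (by positivity)
        _ ≤ κ ^ 2 * 1 * W := by
            have hpt : ρ ^ t ≤ 1 := pow_le_one₀ hρ0' hρ1.le
            gcongr
        _ = κ ^ 2 * W := by ring
        _ ≤ κ ^ 7 * W * r * r := hA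
    have t3 : ‖w t‖ ≤ κ ^ 7 * W * r * r := by
      have hκ2 : (1:ℝ) ≤ κ ^ 2 := one_le_pow₀ hκ
      calc ‖w t‖ ≤ W := hw t
        _ ≤ κ ^ 2 * W := le_mul_of_one_le_left hW0.le hκ2
        _ ≤ κ ^ 7 * W * r * r := hA
    calc ‖mv13 (Ftil ^ t) (w 0) + _ + w t‖
        ≤ ‖mv13 (Ftil ^ t) (w 0)‖ + ‖∑ k ∈ Finset.range t, ∑ s ∈ Finset.Icc 1 (k + 1),
            mv13 (Ftil ^ (t - k - 1) * (G * M k s)) (w (k + 1 - s))‖ + ‖w t‖ :=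
          norm_add₃_le
      _ ≤ (κ ^ 7 * W * r * r) + (κ ^ 7 * W * r * r) + (κ ^ 7 * W * r * r) := by
          gcongr
      _ = 3 * (κ ^ 7 * W * r * r) := by ring
  constructor
  · calc ‖st‖ ≤ 3 * (κ ^ 7 * W * r * r) := hs3
      _ ≤ 4 * W * κ ^ 7 * r ^ 2 := by nlinarith [pow_pos hκ0 7]
  · -- bound on ut
    have hu2 : ‖∑ s ∈ Finset.Icc 1 (t + 1), mv13 (M t s) (w (t + 1 - s))‖
        ≤ κ ^ 4 * W * r := by
      calc ‖∑ s ∈ Finset.Icc 1 (t + 1), mv13 (M t s) (w (t + 1 - s))‖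
          ≤ ∑ s ∈ Finset.Icc 1 (t + 1), ‖mv13 (M t s) (w (t + 1 - s))‖ := norm_sum_le _ _
        _ ≤ ∑ s ∈ Finset.Icc 1 (t + 1), (κ ^ 4 * ρ ^ s) * W := by
            refine Finset.sum_le_sum fun s hs => ?_
            simp only [Finset.mem_Icc] at hs
            calc ‖mv13 (M t s) (w (t + 1 - s))‖
                ≤ spec13 (M t s) * ‖w (t + 1 - s)‖ := mv13_le _ _
              _ ≤ (κ ^ 4 * ρ ^ s) * W := by
                  apply mul_le_mul (hM t s hs.1) (hw _) (norm_nonneg _) (by positivity)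
        _ = (κ ^ 4 * W) * ∑ s ∈ Finset.Icc 1 (t + 1), ρ ^ s := by
            rw [Finset.mul_sum]
            exact Finset.sum_congr rfl fun s _ => by ring
        _ ≤ (κ ^ 4 * W) * r :=
            mul_le_mul_of_nonneg_left (geoIcc13 hρ0' hρ1 (t + 1)) (by positivity)
        _ = κ ^ 4 * W * r := rfl
    calc ‖ut‖ ≤ ‖mv13 K st‖ + ‖∑ s ∈ Finset.Icc 1 (t + 1), mv13 (M t s) (w (t + 1 - s))‖ := by
          rw [hut]
          exact (norm_add_le _ _).trans (by rw [norm_neg])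
      _ ≤ spec13 K * ‖st‖ + κ ^ 4 * W * r := add_le_add (mv13_le _ _) hu2
      _ ≤ κ * (3 * (κ ^ 7 * W * r * r)) + κ ^ 4 * W * r := by
          gcongr
      _ ≤ 4 * W * κ ^ 8 * r ^ 2 := by
          have h48 : κ ^ 4 ≤ κ ^ 8 := hκpow 4 8 (by norm_num)
          have hrr : r ≤ r ^ 2 := by nlinarith
          have e2 : κ ^ 4 * W * r ≤ W * κ ^ 8 * r ^ 2 := by
            calc κ ^ 4 * W * r ≤ κ ^ 8 * W * r :=
                  mul_le_mul_of_nonneg_right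
                    (mul_le_mul_of_nonneg_right h48 hW0.le) hr0.le
              _ ≤ κ ^ 8 * W * r ^ 2 :=
                  mul_le_mul_of_nonneg_left hrr (by positivity)
              _ = W * κ ^ 8 * r ^ 2 := by ring
          nlinarith [e2]
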